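/- Let 1 < p ≤ 2. For all vectors a, b ∈ ℝ^d that are not both zero, one has (|a|^{p−2}a − |b|^{p−2}b)·(a − b) ≥ (p−1)·|a − b|²·(|a| + |b|)^{p−2}, where · denotes the Euclidean inner product and |·| the Euclidean norm. -/
import Mathlib


open scoped RealInnerProductSpace

private lemma rpow_mul_self_aux (α q : ℝ) (hα : 0 ≤ α) (hq : q + 1 ≠ 0) :
    α ^ q * α = α ^ (q + 1) := by
  rcases eq_or_lt_of_le hα with h | h
  · rw [← h, mul_zero, Real.zero_rpow hq]
  · exact (Real.rpow_add_one h.ne' q).symm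

private lemma key_scalar (p α β : ℝ) (hp1 : 1 < p) (hp2 : p ≤ 2) (hβ : 0 ≤ β)
    (hle : β ≤ α) (hpos : 0 < α + β) :
    (p - 1) * (α - β) ^ 2 * (α + β) ^ (p - 2) ≤ (α ^ (p - 1) - β ^ (p - 1)) * (α - β) := by
  rcases eq_or_lt_of_le hle with h | h
  · simp [h]
  · have hα : 0 < α := by linarith
    have hgm := Real.geom_mean_le_arith_mean2_weighted
      (by linarith : (0:ℝ) ≤ 2 - p) (by linarith : (0:ℝ) ≤ p - 1)
      (Real.rpow_nonneg hα.le (p - 1))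
      (mul_nonneg (Real.rpow_nonneg hα.le (p - 2)) hβ) (by ring)
    have hid : (α ^ (p - 1)) ^ (2 - p) * (α ^ (p - 2) * β) ^ (p - 1) = β ^ (p - 1) := by
      rw [← Real.rpow_mul hα.le, Real.mul_rpow (Real.rpow_nonneg hα.le _) hβ,
        ← Real.rpow_mul hα.le, ← mul_assoc, ← Real.rpow_add hα,
        show (p - 1) * (2 - p) + (p - 2) * (p - 1) = 0 by ring, Real.rpow_zero, one_mul]
    rw [hid] at hgm
    have e1 : α ^ (p - 2) * α = α ^ (p - 1) := by
      have := rpow_mul_self_aux α (p - 2) hα.le (by intro hc; linarith)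
      rw [this]; ring_nf
    have step1 : (p - 1) * α ^ (p - 2) * (α - β) ≤ α ^ (p - 1) - β ^ (p - 1) := by
      calc (p - 1) * α ^ (p - 2) * (α - β)
          = (p - 1) * (α ^ (p - 2) * α) - (p - 1) * (α ^ (p - 2) * β) := by ring
        _ = (p - 1) * α ^ (p - 1) - (p - 1) * (α ^ (p - 2) * β) := by rw [e1]
        _ ≤ α ^ (p - 1) - β ^ (p - 1) := by linarith [hgm]
    have hB : (α + β) ^ (p - 2) ≤ α ^ (p - 2) :=
      Real.rpow_le_rpow_of_nonpos hα (by linarith) (by linarith)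
    calc (p - 1) * (α - β) ^ 2 * (α + β) ^ (p - 2)
        ≤ (p - 1) * (α - β) ^ 2 * α ^ (p - 2) := by
          have := mul_le_mul_of_nonneg_left hB
            (mul_nonneg (by linarith : (0:ℝ) ≤ p - 1) (sq_nonneg (α - β)))
          linarith [this]
      _ = ((p - 1) * α ^ (p - 2) * (α - β)) * (α - β) := by ring
      _ ≤ (α ^ (p - 1) - β ^ (p - 1)) * (α - β) :=
          mul_le_mul_of_nonneg_right step1 (by linarith)

theorem stmt6 (d : ℕ) (p : ℝ) (hp1 : 1 < p) (hp2 : p ≤ 2)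
    (a b : EuclideanSpace ℝ (Fin d)) (hab : a ≠ 0 ∨ b ≠ 0) :
    (p - 1) * ‖a - b‖ ^ 2 * (‖a‖ + ‖b‖) ^ (p - 2) ≤
      ⟪(‖a‖ ^ (p - 2)) • a - (‖b‖ ^ (p - 2)) • b, a - b⟫ := by
  set A := ‖a‖ with hA
  set B := ‖b‖ with hB
  have hA0 : 0 ≤ A := norm_nonneg a
  have hB0 : 0 ≤ B := norm_nonneg b
  have hABpos : 0 < A + B := by
    rcases hab with h | h
    · have : 0 < A := norm_pos_iff.mpr h; linarith
    · have : 0 < B := norm_pos_iff.mpr h; linarith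
  set t := ⟪a, b⟫ with htdef
  have ht : t ≤ A * B := real_inner_le_norm a b
  -- identities
  have e1a : A ^ (p - 2) * A = A ^ (p - 1) := by
    have := rpow_mul_self_aux A (p - 2) hA0 (by intro hc; linarith)
    rw [this]; ring_nf
  have e1b : B ^ (p - 2) * B = B ^ (p - 1) := by
    have := rpow_mul_self_aux B (p - 2) hB0 (by intro hc; linarith)
    rw [this]; ring_nf
  -- expansion of the inner product
  have hexp : ⟪(A ^ (p - 2)) • a - (B ^ (p - 2)) • b, a - b⟫
      = A ^ (p - 2) * A ^ 2 + B ^ (p - 2) * B ^ 2 - (A ^ (p - 2) + B ^ (p - 2)) * t := by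
    have hba : ⟪b, a⟫ = t := by rw [real_inner_comm]
    simp only [inner_sub_left, inner_sub_right, real_inner_smul_left,
      real_inner_self_eq_norm_sq, hba, ← hA, ← hB, ← htdef]
    ring
  have hns : ‖a - b‖ ^ 2 = A ^ 2 + B ^ 2 - 2 * t := by
    rw [norm_sub_sq_real, ← hA, ← hB, ← htdef]; ring
  -- slack inequality
  have hslack : (A * B - t) * (2 * (p - 1) * (A + B) ^ (p - 2))
      ≤ (A * B - t) * (A ^ (p - 2) + B ^ (p - 2)) := by
    by_cases ha : a = 0
    · have : A = 0 := by simp [hA, ha]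
      have ht0 : t = 0 := by simp [htdef, ha]
      simp [this, ht0]
    · by_cases hb : b = 0
      · have : B = 0 := by simp [hB, hb]
        have ht0 : t = 0 := by simp [htdef, hb]
        simp [this, ht0]
      · have hApos : 0 < A := norm_pos_iff.mpr ha
        have hBpos : 0 < B := norm_pos_iff.mpr hb
        have h1 : (A + B) ^ (p - 2) ≤ A ^ (p - 2) :=
          Real.rpow_le_rpow_of_nonpos hApos (by linarith) (by linarith)
        have h2 : (A + B) ^ (p - 2) ≤ B ^ (p - 2) :=
          Real.rpow_le_rpow_of_nonpos hBpos (by linarith) (by linarith)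
        have h0 : 0 ≤ (A + B) ^ (p - 2) := Real.rpow_nonneg hABpos.le _
        have hcoef : 2 * (p - 1) * (A + B) ^ (p - 2) ≤ A ^ (p - 2) + B ^ (p - 2) := by
          nlinarith
        exact mul_le_mul_of_nonneg_left hcoef (by linarith)
  -- key scalar inequality
  have hkey : (p - 1) * (A - B) ^ 2 * (A + B) ^ (p - 2)
      ≤ (A ^ (p - 1) - B ^ (p - 1)) * (A - B) := by
    rcases le_total B A with h | h
    · exact key_scalar p A B hp1 hp2 hB0 h hABpos
    · have := key_scalar p B A hp1 hp2 hA0 h (by linarith)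
      have e : (B + A) ^ (p - 2) = (A + B) ^ (p - 2) := by rw [add_comm]
      rw [e] at this
      nlinarith [this]
  -- assemble
  rw [hexp, hns]
  have id2 : A ^ (p - 2) * A ^ 2 + B ^ (p - 2) * B ^ 2 - (A ^ (p - 2) + B ^ (p - 2)) * t
      = (A ^ (p - 1) - B ^ (p - 1)) * (A - B)
        + (A * B - t) * (A ^ (p - 2) + B ^ (p - 2)) := by
    linear_combination (A - B) * e1a + (B - A) * e1b
  have id1 : (p - 1) * (A ^ 2 + B ^ 2 - 2 * t) * (A + B) ^ (p - 2)
      = (p - 1) * (A - B) ^ 2 * (A + B) ^ (p - 2)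
        + (A * B - t) * (2 * (p - 1) * (A + B) ^ (p - 2)) := by ring
  linarith [hkey, hslack]
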